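/- For real variables X_1,...,X_p (p ≥ 1) and n = m in the bracket identity: Σ_{i=1}^p X_i (e_{n-1}^{ī}(X))^2 = Σ_{k=1}^{p} (2k-1) e_{n-k}(X) e_{n+k-1}(X) for every 1 ≤ n ≤ p. -/

import Mathlib

open Finset

/-- The `k`-th elementary symmetric polynomial of the values `X i` for `i` in `s`. -/
noncomputable def esym {p : ℕ} (X : Fin p → ℝ) (s : Finset (Fin p)) (k : ℕ) : ℝ :=
  ∑ t ∈ s.powersetCard k, ∏ i ∈ t, X i

/-- The `r`-th elementary symmetric polynomial with the convention `e_r = 0` for `r < 0`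
(and automatically for `r > p`). -/
noncomputable def esymZ {p : ℕ} (X : Fin p → ℝ) (r : ℤ) : ℝ :=
  if 0 ≤ r then esym X univ r.toNat else 0

lemma esym_zero {p : ℕ} (X : Fin p → ℝ) (s : Finset (Fin p)) : esym X s 0 = 1 := by
  simp [esym]

/-- Deletion recurrence: `e_{r+1} = e_{r+1}^ī + X i * e_r^ī`. -/
lemma esym_erase_rec {p : ℕ} (X : Fin p → ℝ) (i : Fin p) (r : ℕ) :
    esym X univ (r + 1) = esym X (univ.erase i) (r + 1) + X i * esym X (univ.erase i) r := by
  have hi : i ∉ univ.erase i := notMem_erase i univ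
  have huniv : (univ : Finset (Fin p)) = insert i (univ.erase i) :=
    (insert_erase (mem_univ i)).symm
  have hdisj : Disjoint (powersetCard (r + 1) (univ.erase i))
      ((powersetCard r (univ.erase i)).image (insert i)) := by
    rw [disjoint_right]
    intro T hT hT'
    simp only [mem_image, mem_powersetCard] at hT hT'
    obtain ⟨S, ⟨hS, _⟩, rfl⟩ := hT
    exact hi (hT'.1 (mem_insert_self i S))
  rw [esym]
  conv_lhs => rw [huniv]
  rw [powersetCard_succ_insert hi, sum_union hdisj, sum_image, esym, esym, mul_sum]
  · congr 1
    refine sum_congr rfl fun T hT => ?_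
    rw [mem_powersetCard] at hT
    exact prod_insert fun h => hi (hT.1 h)
  · intro a ha b hb hab
    rw [mem_coe, mem_powersetCard] at ha hb
    have hia : i ∉ a := fun h => hi (ha.1 h)
    have hib : i ∉ b := fun h => hi (hb.1 h)
    have := congrArg (Finset.erase · i) hab
    simpa [erase_insert hia, erase_insert hib] using this

lemma powersetCard_erase {p : ℕ} (i : Fin p) (r : ℕ) :
    powersetCard r ((univ : Finset (Fin p)).erase i)
      = (powersetCard r (univ : Finset (Fin p))).filter (fun T => i ∉ T) := by
  ext T
  simp only [mem_powersetCard, mem_filter, subset_erase]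
  tauto

/-- `Σ_i e_r^ī = (p - r) e_r`. -/
lemma sum_esym_erase {p : ℕ} (X : Fin p → ℝ) (r : ℕ) :
    ∑ i : Fin p, esym X (univ.erase i) r = ((p : ℝ) - r) * esym X univ r := by
  have h : ∀ i : Fin p, esym X (univ.erase i) r
      = ∑ T ∈ powersetCard r (univ : Finset (Fin p)),
          (if i ∈ T then 0 else ∏ j ∈ T, X j) := by
    intro i
    rw [esym, powersetCard_erase, sum_filter]
    exact sum_congr rfl fun T _ => by by_cases h : i ∈ T <;> simp [h]
  simp only [h]
  rw [Finset.sum_comm, esym, mul_sum]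
  refine sum_congr rfl fun T hT => ?_
  rw [mem_powersetCard] at hT
  rw [Finset.sum_ite, sum_const, sum_const, smul_zero, zero_add]
  have hcompl : (univ.filter fun i => ¬ i ∈ T) = Tᶜ := by
    ext x; simp [Finset.mem_compl]
  rw [hcompl, card_compl, Fintype.card_fin, hT.2, nsmul_eq_mul]
  have : r ≤ p := hT.2 ▸ (card_le_card hT.1).trans (by simp)
  rw [Nat.cast_sub this]

/-- `Σ_i X i * e_r^ī = (r+1) e_{r+1}`. -/
lemma sum_mul_esym_erase {p : ℕ} (X : Fin p → ℝ) (r : ℕ) :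
    ∑ i : Fin p, X i * esym X (univ.erase i) r = ((r : ℝ) + 1) * esym X univ (r + 1) := by
  have h : ∀ i : Fin p, X i * esym X (univ.erase i) r
      = esym X univ (r + 1) - esym X (univ.erase i) (r + 1) := by
    intro i
    have := esym_erase_rec X i r
    linarith
  simp only [h]
  rw [sum_sub_distrib, sum_const, sum_esym_erase, card_univ, Fintype.card_fin, nsmul_eq_mul]
  push_cast
  ring

/-- Key identity: `Σ_i X_i e_α^ī e_β^ī = Σ_{k=1}^{β+1} (α-β+2k-1) e_{α+k} e_{β+1-k}`. -/
lemma T_eq {p : ℕ} (X : Fin p → ℝ) (β : ℕ) : ∀ α : ℕ,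
    ∑ i : Fin p, X i * esym X (univ.erase i) α * esym X (univ.erase i) β
      = ∑ k ∈ Finset.Icc 1 (β + 1),
          ((α : ℝ) - β + 2 * k - 1) * esym X univ (α + k) * esym X univ (β + 1 - k) := by
  induction β with
  | zero =>
    intro α
    have h01 : Finset.Icc 1 (0 + 1) = {1} := by norm_num
    rw [h01, Finset.sum_singleton]
    simp only [Nat.add_sub_cancel, esym_zero, mul_one]
    rw [sum_mul_esym_erase]
    push_cast
    ring
  | succ β ih =>
    intro α
    have step1 : ∀ i : Fin p, X i * esym X (univ.erase i) α * esym X (univ.erase i) (β + 1)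
        = (esym X univ (α + 1) - esym X (univ.erase i) (α + 1))
            * esym X (univ.erase i) (β + 1) := by
      intro i
      have := esym_erase_rec X i α
      have h2 : X i * esym X (univ.erase i) α
          = esym X univ (α + 1) - esym X (univ.erase i) (α + 1) := by linarith
      rw [mul_assoc] at *
      rw [← h2]
      ring
    have step2 : ∀ i : Fin p, esym X (univ.erase i) (α + 1) * esym X (univ.erase i) (β + 1)
        = esym X (univ.erase i) (α + 1) * esym X univ (β + 1)
            - X i * esym X (univ.erase i) (α + 1) * esym X (univ.erase i) β := by
      intro i
      have := esym_erase_rec X i β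
      have h2 : esym X (univ.erase i) (β + 1)
          = esym X univ (β + 1) - X i * esym X (univ.erase i) β := by linarith
      rw [h2]; ring
    calc ∑ i : Fin p, X i * esym X (univ.erase i) α * esym X (univ.erase i) (β + 1)
        = ∑ i : Fin p, (esym X univ (α + 1) * esym X (univ.erase i) (β + 1)
            - esym X (univ.erase i) (α + 1) * esym X univ (β + 1)
            + X i * esym X (univ.erase i) (α + 1) * esym X (univ.erase i) β) := by
          refine sum_congr rfl fun i _ => ?_
          rw [step1 i, sub_mul, step2 i]; ring
      _ = ((α : ℝ) - β) * esym X univ (α + 1) * esym X univ (β + 1)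
            + ∑ i : Fin p, X i * esym X (univ.erase i) (α + 1) * esym X (univ.erase i) β := by
          rw [sum_add_distrib, sum_sub_distrib, ← mul_sum, sum_esym_erase,
            ← sum_mul, sum_esym_erase]
          push_cast
          ring
      _ = ((α : ℝ) - β) * esym X univ (α + 1) * esym X univ (β + 1)
            + ∑ k ∈ Finset.Icc 1 (β + 1),
                (((α : ℝ) + 1) - β + 2 * k - 1) * esym X univ (α + 1 + k)
                  * esym X univ (β + 1 - k) := by
          rw [ih (α + 1)]; push_cast; ring_nf
      _ = ∑ k ∈ Finset.Icc 1 (β + 1 + 1),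
            ((α : ℝ) - ((β : ℕ) + 1 : ℕ) + 2 * k - 1) * esym X univ (α + k)
              * esym X univ (β + 1 + 1 - k) := by
          have hsplit : Finset.Icc 1 (β + 1 + 1)
              = insert 1 ((Finset.Icc 1 (β + 1)).image (· + 1)) := by
            ext x
            simp only [Finset.mem_Icc, Finset.mem_insert, Finset.mem_image]
            constructor
            · rintro ⟨hx1, hx2⟩
              rcases eq_or_lt_of_le hx1 with h | h
              · exact Or.inl h.symm
              · exact Or.inr ⟨x - 1, ⟨by omega, by omega⟩, by omega⟩
            · rintro (rfl | ⟨a, ⟨ha1, ha2⟩, rfl⟩) <;> omega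
          have h1mem : (1 : ℕ) ∉ (Finset.Icc 1 (β + 1)).image (· + 1) := by
            simp only [Finset.mem_image, Finset.mem_Icc]
            rintro ⟨a, ⟨ha1, ha2⟩, h⟩
            omega
          have hre : ∑ k ∈ Finset.Icc 1 (β + 1 + 1),
                ((α : ℝ) - ((β : ℕ) + 1 : ℕ) + 2 * k - 1) * esym X univ (α + k)
                  * esym X univ (β + 1 + 1 - k)
              = ((α : ℝ) - β) * esym X univ (α + 1) * esym X univ (β + 1)
                + ∑ k ∈ Finset.Icc 1 (β + 1),
                    (((α : ℝ) + 1) - β + 2 * k - 1) * esym X univ (α + 1 + k)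
                      * esym X univ (β + 1 - k) := by
            rw [hsplit, Finset.sum_insert h1mem,
              Finset.sum_image (fun a _ b _ h => by omega)]
            congr 1
            · simp only [Nat.add_sub_cancel]
              push_cast
              ring
            · refine sum_congr rfl fun k hk => ?_
              rw [Finset.mem_Icc] at hk
              have e1 : α + (k + 1) = α + 1 + k := by omega
              have e2 : β + 1 + 1 - (k + 1) = β + 1 - k := by omega
              rw [e1, e2]
              push_cast
              ring
          exact hre.symm

theorem bracket_identity_diag {p : ℕ} (hp : 1 ≤ p) (X : Fin p → ℝ) (n : ℕ)
    (h1 : 1 ≤ n) (h2 : n ≤ p) :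
    ∑ i : Fin p, X i * (esym X (univ.erase i) (n - 1)) ^ 2
      = ∑ k ∈ Finset.Icc 1 p,
          (2 * (k : ℝ) - 1) * esymZ X ((n : ℤ) - k) * esymZ X ((n : ℤ) + k - 1) := by
  have key := T_eq X (n - 1) (n - 1)
  have hn : n - 1 + 1 = n := Nat.succ_pred_eq_of_pos h1
  rw [hn] at key
  have lhs_eq : ∑ i : Fin p, X i * (esym X (univ.erase i) (n - 1)) ^ 2
      = ∑ i : Fin p, X i * esym X (univ.erase i) (n - 1) * esym X (univ.erase i) (n - 1) := by
    refine sum_congr rfl fun i _ => ?_; ring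
  rw [lhs_eq, key]
  -- now identify the two sums
  rw [← Finset.sum_subset (Finset.Icc_subset_Icc_right h2 :
      Finset.Icc 1 n ⊆ Finset.Icc 1 p)]
  · refine sum_congr rfl fun k hk => ?_
    rw [Finset.mem_Icc] at hk
    have hk1 := hk.1
    have hkn := hk.2
    have hz1 : (n : ℤ) - k = ((n - k : ℕ) : ℤ) := by push_cast [hkn]; ring
    have hz2 : (n : ℤ) + k - 1 = ((n - 1 + k : ℕ) : ℤ) := by
      push_cast [h1]; ring
    rw [esymZ, esymZ, hz1, hz2, if_pos (Int.natCast_nonneg _), if_pos (Int.natCast_nonneg _),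
      Int.toNat_natCast, Int.toNat_natCast]
    have hc : ((n - 1 : ℕ) : ℝ) - ((n - 1 : ℕ) : ℝ) + 2 * k - 1 = 2 * (k : ℝ) - 1 := by
      ring
    rw [hc]
    ring
  · intro k hk hk'
    rw [Finset.mem_Icc] at hk hk'
    have hnk : (n : ℤ) - k < 0 := by omega
    rw [esymZ, if_neg (by omega)]
    ring
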